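/- Let φ be a solution of the normalized equation EQ_λ on (0,∞) with φ(t) > 0 for all t > 0 and liminf_{t→∞} φ(t) = 0. Then lim_{t→∞} E(t) = 0, φ has no local minimum point in (0,∞), and φ is eventually monotone decreasing with lim_{t→∞} φ(t) = 0. -/

import Mathlib

open Real Set Filter

set_option maxHeartbeats 1600000 in
/-- If a positive solution φ of the normalized equation EQ_λ has liminf 0 at infinity,
then its energy tends to 0 at infinity, φ has no local minimum point in (0,∞), and φ
is eventually monotone decreasing with limit 0 at infinity. -/
theorem positive_solution_with_liminf_zero
    (n : ℕ) (hn : 2 ≤ n) (lam q : ℝ) (hlam : 0 < lam) (hq : 1 < q)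
    (φ φ' φ'' : ℝ → ℝ)
    (hd1 : ∀ t ∈ Ioi (0:ℝ), HasDerivAt φ (φ' t) t)
    (hd2 : ∀ t ∈ Ioi (0:ℝ), HasDerivAt φ' (φ'' t) t)
    (hode : ∀ t ∈ Ioi (0:ℝ),
      φ'' t + ((n : ℝ) - 1) * ((exp (2*t) + 1) / (exp (2*t) - 1)) * φ' t
        = lam * (φ t - |φ t| ^ (q - 1) * φ t))
    (E : ℝ → ℝ)
    (hE : ∀ t, E t = (1/2) * (φ' t)^2 + lam * (|φ t| ^ (q + 1) / (q + 1) - (φ t)^2 / 2))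
    (hpos : ∀ t ∈ Ioi (0:ℝ), 0 < φ t)
    (hliminf : liminf φ atTop = 0) :
    Tendsto E atTop (nhds 0) ∧
    (∀ t₀ ∈ Ioi (0:ℝ), ¬ IsLocalMin φ t₀) ∧
    (∃ T : ℝ, 0 < T ∧ AntitoneOn φ (Ici T)) ∧
    Tendsto φ atTop (nhds 0) := by
  have hq0 : (0:ℝ) < q - 1 := by linarith
  have hq1 : (0:ℝ) < q + 1 := by linarith
  have hn1 : (1:ℝ) ≤ (n:ℝ) - 1 := by
    have : (2:ℝ) ≤ (n:ℝ) := by exact_mod_cast hn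
    linarith
  set A : ℝ → ℝ := fun t => ((n : ℝ) - 1) * ((exp (2*t) + 1) / (exp (2*t) - 1)) with hA
  have hAge : ∀ t ∈ Ioi (0:ℝ), (n:ℝ) - 1 ≤ A t := by
    intro t ht
    have h1 : (1:ℝ) < exp (2*t) := by
      have : (0:ℝ) < 2 * t := by simp only [mem_Ioi] at ht; linarith
      calc (1:ℝ) = exp 0 := by simp
        _ < exp (2*t) := exp_lt_exp.2 this
    have h2 : (0:ℝ) < exp (2*t) - 1 := by linarith
    have h3 : (1:ℝ) ≤ (exp (2*t)+1)/(exp (2*t)-1) := by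
      rw [le_div_iff₀ h2]; linarith
    have hn0 : (0:ℝ) ≤ (n:ℝ) - 1 := by linarith
    calc (n:ℝ) - 1 = ((n:ℝ)-1) * 1 := by ring
      _ ≤ A t := by rw [hA]; exact mul_le_mul_of_nonneg_left h3 hn0
  -- derivative of the energy
  have hEd : ∀ t ∈ Ioi (0:ℝ), HasDerivAt E (-(A t * (φ' t)^2)) t := by
    intro t ht
    have hpt := hpos t ht
    have hct : ContinuousAt φ t := (hd1 t ht).continuousAt
    have hev : ∀ᶠ s in nhds t, 0 < φ s := hct.eventually (eventually_gt_nhds hpt)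
    have h1 : HasDerivAt (fun s => (φ' s)^2) (2 * φ' t * φ'' t) t := by
      have := (hd2 t ht).pow 2
      simp at this; exact this
    have h2 : HasDerivAt (fun s => (φ s)^(q+1)) (φ' t * (q+1) * φ t ^ q) t := by
      have := (hd1 t ht).rpow_const (p := q+1) (Or.inl (ne_of_gt hpt))
      simpa [add_sub_cancel_right] using this
    have h3 : HasDerivAt (fun s => (φ s)^2) (2 * φ t * φ' t) t := by
      have := (hd1 t ht).pow 2
      simp at this; exact this
    have hsum := ((h1.const_mul (1/2:ℝ)).add
      (((h2.div_const (q+1)).sub (h3.div_const 2)).const_mul lam))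
    have heq : E =ᶠ[nhds t]
        fun s => (1/2) * (φ' s)^2 + lam * ((φ s)^(q+1) / (q+1) - (φ s)^2 / 2) := by
      filter_upwards [hev] with s hs
      rw [hE s, abs_of_pos hs]
    have hED := hsum.congr_of_eventuallyEq heq
    have hphi'' : φ'' t = lam * (φ t - φ t ^ q) - A t * φ' t := by
      have h := hode t ht
      rw [abs_of_pos hpt] at h
      have e1 : φ t ^ (q-1) * φ t = φ t ^ q := by
        rw [← Real.rpow_add_one (ne_of_gt hpt) (q-1)]
        norm_num
      rw [e1] at h
      rw [hA]
      linarith [h]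
    have hval : (1/2) * (2 * φ' t * φ'' t) +
        lam * ((φ' t * (q+1) * φ t ^ q) / (q+1) - (2 * φ t * φ' t) / 2)
        = -(A t * (φ' t)^2) := by
      rw [hphi'']
      have hne : (q+1) ≠ 0 := by linarith
      field_simp
      ring
    rw [hval] at hED
    exact hED
  -- energy is nonincreasing
  have hEanti : AntitoneOn E (Ioi (0:ℝ)) := by
    apply antitoneOn_of_deriv_nonpos (convex_Ioi 0)
    · intro x hx; exact (hEd x hx).continuousAt.continuousWithinAt
    · intro x hx; rw [interior_Ioi] at hx
      exact (hEd x hx).differentiableAt.differentiableWithinAt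
    · intro x hx; rw [interior_Ioi] at hx
      rw [(hEd x hx).deriv]
      have h1 := hAge x hx
      nlinarith [sq_nonneg (φ' x)]
  -- φ is not tending to +infinity
  have hnotop : ¬ Tendsto φ atTop atTop := by
    intro htop
    set M := max (max 1 ((q+1) ^ (1/(q-1)))) (Real.sqrt (2 * max (E 1) 0 / lam + 1)) with hM
    obtain ⟨t, htM, ht1⟩ := ((htop.eventually_ge_atTop M).and (eventually_ge_atTop (1:ℝ))).exists
    have ht0 : t ∈ Ioi (0:ℝ) := by simp only [mem_Ioi]; linarith
    have hφt := hpos t ht0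
    have hM1 : (1:ℝ) ≤ M := le_trans (le_max_left 1 _) (le_max_left _ _)
    have hcpos : (0:ℝ) < (q+1) ^ (1/(q-1)) := Real.rpow_pos_of_pos hq1 _
    have hMc : ((q+1:ℝ)) ^ (1/(q-1)) ≤ M := le_trans (le_max_right 1 _) (le_max_left _ _)
    have hMq : (q+1) ≤ M ^ (q-1) := by
      have e1 : (((q+1:ℝ)) ^ (1/(q-1))) ^ (q-1) = q+1 := by
        rw [← Real.rpow_mul hq1.le, one_div_mul_cancel (ne_of_gt hq0), Real.rpow_one]
      calc (q+1:ℝ) = (((q+1:ℝ)) ^ (1/(q-1))) ^ (q-1) := e1.symm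
        _ ≤ M ^ (q-1) := Real.rpow_le_rpow hcpos.le hMc hq0.le
    have hsq : 2 * max (E 1) 0 / lam + 1 ≤ M^2 := by
      have h1 : Real.sqrt (2 * max (E 1) 0 / lam + 1) ≤ M := le_max_right _ _
      have h2 : (0:ℝ) ≤ 2 * max (E 1) 0 / lam + 1 := by positivity
      calc 2 * max (E 1) 0 / lam + 1
          = (Real.sqrt (2 * max (E 1) 0 / lam + 1))^2 := (Real.sq_sqrt h2).symm
        _ ≤ M^2 := by nlinarith [Real.sqrt_nonneg (2 * max (E 1) 0 / lam + 1)]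
    have hkey : (q+1) * (φ t)^2 ≤ (φ t)^(q+1) := by
      have e3 : (φ t)^(q+1) = (φ t)^(q-1) * (φ t)^2 := by
        rw [show q+1 = (q-1)+2 by ring, Real.rpow_add hφt, Real.rpow_two]
      have h4 : M^(q-1) ≤ (φ t)^(q-1) :=
        Real.rpow_le_rpow (by linarith) htM hq0.le
      have h5 := mul_le_mul_of_nonneg_right (le_trans hMq h4) (sq_nonneg (φ t))
      rw [e3]
      linarith
    have hE1t : E t ≤ E 1 := hEanti (mem_Ioi.2 one_pos) (by simp only [mem_Ioi]; linarith) ht1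
    have h7 : (φ t)^2 ≤ (φ t)^(q+1)/(q+1) := by
      rw [le_div_iff₀ hq1]
      nlinarith [hkey]
    have h8 : lam * ((φ t)^2 - (φ t)^2/2) ≤ E t := by
      rw [hE t, abs_of_pos hφt]
      nlinarith [sq_nonneg (φ' t), mul_le_mul_of_nonneg_left h7 hlam.le,
        mul_nonneg hlam.le (sq_nonneg (φ t))]
    have h9 : M^2 ≤ (φ t)^2 := by nlinarith
    have h10 : lam * ((φ t)^2 - (φ t)^2/2) = lam * (φ t)^2/2 := by ring
    have h11 : lam * M^2 ≤ lam * (φ t)^2 := mul_le_mul_of_nonneg_left h9 hlam.le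
    have h12 : lam * (2 * max (E 1) 0 / lam + 1) ≤ lam * M^2 :=
      mul_le_mul_of_nonneg_left hsq hlam.le
    have h13 : lam * (2 * max (E 1) 0 / lam + 1) = 2 * max (E 1) 0 + lam := by
      field_simp
    have h14 : E 1 ≤ max (E 1) 0 := le_max_left _ _
    linarith
  -- frequently φ is small
  have hfreq : ∀ ε, 0 < ε → ∀ T : ℝ, ∃ t, T ≤ t ∧ φ t < ε := by
    by_contra hcon
    push_neg at hcon
    obtain ⟨ε, hε, T, hT⟩ := hcon
    have hSε : ε ∈ {a : ℝ | ∀ᶠ t in atTop, a ≤ φ t} := by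
      simp only [mem_setOf_eq, eventually_atTop]
      exact ⟨T, hT⟩
    by_cases hbdd : BddAbove {a : ℝ | ∀ᶠ t in atTop, a ≤ φ t}
    · have h1 : liminf φ atTop = sSup {a : ℝ | ∀ᶠ t in atTop, a ≤ φ t} := liminf_eq
      have h2 : ε ≤ sSup {a : ℝ | ∀ᶠ t in atTop, a ≤ φ t} := le_csSup hbdd hSε
      rw [← h1, hliminf] at h2
      linarith
    · apply hnotop
      rw [tendsto_atTop]
      intro b
      obtain ⟨x, hxS, hbx⟩ := not_bddAbove_iff.1 hbdd b
      exact hxS.mono fun t ht => le_trans hbx.le ht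
  -- nonnegativity of the energy
  have hE0 : ∀ t ∈ Ioi (0:ℝ), 0 ≤ E t := by
    intro t ht
    by_contra hneg
    push_neg at hneg
    have hεpos : 0 < min 1 (-(E t)/lam) := by
      apply lt_min one_pos
      apply div_pos (by linarith) hlam
    obtain ⟨s, hs1, hs2⟩ := hfreq _ hεpos (max t 1)
    have hst : t ≤ s := le_trans (le_max_left t 1) hs1
    have hs0 : s ∈ Ioi (0:ℝ) := by
      simp only [mem_Ioi]
      linarith [le_trans (le_max_right t 1) hs1]
    have h1 : E s ≤ E t := hEanti ht hs0 hst
    have hφs := hpos s hs0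
    have h2 : 0 ≤ |φ s| ^ (q+1) / (q+1) := by positivity
    have hε1 : min 1 (-(E t)/lam) ≤ 1 := min_le_left _ _
    have hε2 : min 1 (-(E t)/lam) ≤ -(E t)/lam := min_le_right _ _
    have h4 : -(lam * (φ s)^2 / 2) ≤ E s := by
      rw [hE s]
      nlinarith [sq_nonneg (φ' s), mul_nonneg hlam.le h2]
    have h5 : (φ s)^2 ≤ min 1 (-(E t)/lam) := by nlinarith [hφs, hs2, hε1, hεpos]
    have h6 : lam * min 1 (-(E t)/lam) ≤ -(E t) := by
      rw [← le_div_iff₀' hlam]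
      exact hε2
    nlinarith [mul_le_mul_of_nonneg_left h5 hlam.le]
  -- critical points have value > 1
  have hcrit : ∀ t ∈ Ioi (0:ℝ), φ' t = 0 → 1 < φ t := by
    intro t ht h0
    by_contra hle
    push_neg at hle
    have hφt := hpos t ht
    have h1 : (φ t)^(q+1) ≤ (φ t)^2 := by
      have := Real.rpow_le_rpow_of_exponent_ge hφt hle (show (2:ℝ) ≤ q+1 by linarith)
      rwa [Real.rpow_two] at this
    have h2 := hE0 t ht
    rw [hE t, h0, abs_of_pos hφt] at h2
    have hφ2 : 0 < (φ t)^2 := by positivity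
    have h3 : (φ t)^(q+1)/(q+1) ≤ (φ t)^2/(q+1) := by gcongr
    have h4 : (φ t)^2/(q+1) < (φ t)^2/2 := by
      apply div_lt_div_of_pos_left hφ2 two_pos
      linarith
    nlinarith
  -- no local minimum
  have hnomin : ∀ t₀ ∈ Ioi (0:ℝ), ¬ IsLocalMin φ t₀ := by
    intro t₀ ht₀ hmin
    have h0 : φ' t₀ = 0 := hmin.hasDerivAt_eq_zero (hd1 t₀ ht₀)
    have h1 : 1 < φ t₀ := hcrit t₀ ht₀ h0
    have hpt := hpos t₀ ht₀
    have hgt : φ t₀ < φ t₀ ^ q := by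
      have := Real.rpow_lt_rpow_of_exponent_lt h1 hq
      rwa [Real.rpow_one] at this
    have h2 : φ'' t₀ < 0 := by
      have h := hode t₀ ht₀
      rw [abs_of_pos hpt] at h
      have e1 : φ t₀ ^ (q-1) * φ t₀ = φ t₀ ^ q := by
        rw [← Real.rpow_add_one (ne_of_gt hpt) (q-1)]
        norm_num
      rw [e1, h0] at h
      have : φ'' t₀ = lam * (φ t₀ - φ t₀ ^ q) := by
        linarith [h]
      rw [this]
      nlinarith
    have hslope := hasDerivAt_iff_tendsto_slope.1 (hd2 t₀ ht₀)
    have h3 : ∀ᶠ s in nhdsWithin t₀ {t₀}ᶜ, slope φ' t₀ s < 0 :=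
      hslope.eventually (eventually_lt_nhds h2)
    have h4 : ∀ᶠ s in nhdsWithin t₀ (Ioi t₀), slope φ' t₀ s < 0 :=
      h3.filter_mono (nhdsWithin_mono t₀ (fun s hs => ne_of_gt hs))
    have hev : ∀ᶠ s in nhdsWithin t₀ (Ioi t₀), φ' s < 0 := by
      filter_upwards [h4, self_mem_nhdsWithin] with s hs hs'
      have hst : (0:ℝ) < s - t₀ := sub_pos.2 hs'
      rw [slope_def_field, h0, sub_zero] at hs
      by_contra hge
      push_neg at hge
      exact absurd (div_nonneg hge hst.le) (not_le.2 hs)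
    have hminev : ∀ᶠ s in nhdsWithin t₀ (Ioi t₀), φ t₀ ≤ φ s :=
      Filter.Eventually.filter_mono nhdsWithin_le_nhds hmin
    obtain ⟨b, hb, hIoo⟩ := (nhdsGT_basis t₀).eventually_iff.1 (hev.and hminev)
    have hc1 : t₀ < (t₀ + b)/2 := by linarith
    have hc2 : (t₀ + b)/2 < b := by linarith
    have hanti : StrictAntiOn φ (Icc t₀ ((t₀+b)/2)) := by
      apply strictAntiOn_of_deriv_neg (convex_Icc _ _)
      · intro x hx
        have hx0 : x ∈ Ioi (0:ℝ) := by
          simp only [mem_Ioi]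
          simp only [mem_Ioi] at ht₀
          linarith [hx.1]
        exact (hd1 x hx0).continuousAt.continuousWithinAt
      · intro x hx
        rw [interior_Icc] at hx
        have hx0 : x ∈ Ioi (0:ℝ) := by
          simp only [mem_Ioi]
          simp only [mem_Ioi] at ht₀
          linarith [hx.1]
        rw [(hd1 x hx0).deriv]
        exact (hIoo ⟨hx.1, lt_trans hx.2 hc2⟩).1
    have hlt : φ ((t₀+b)/2) < φ t₀ :=
      hanti (left_mem_Icc.2 hc1.le) (right_mem_Icc.2 hc1.le) hc1
    have hge : φ t₀ ≤ φ ((t₀+b)/2) := (hIoo ⟨hc1, hc2⟩).2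
    linarith
  -- speed bound in the strip 1/2 ≤ φ ≤ 1
  have hmpos : (0:ℝ) < (q-1)/(8*(q+1)) := by positivity
  set v : ℝ := Real.sqrt (2*lam*((q-1)/(8*(q+1)))) with hv
  have hvpos : 0 < v := Real.sqrt_pos.2 (by positivity)
  have hspeed : ∀ t ∈ Ioi (0:ℝ), 1/2 ≤ φ t → φ t ≤ 1 → v ≤ |φ' t| := by
    intro t ht hl hr
    have hφt := hpos t ht
    have h1 : (φ t)^(q+1) ≤ (φ t)^2 := by
      have := Real.rpow_le_rpow_of_exponent_ge hφt hr (show (2:ℝ) ≤ q+1 by linarith)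
      rwa [Real.rpow_two] at this
    have h2 := hE0 t ht
    rw [hE t, abs_of_pos hφt] at h2
    have h3 : 2*lam*((q-1)/(8*(q+1))) ≤ (φ' t)^2 := by
      have hA1 : (φ t)^(q+1)/(q+1) ≤ (φ t)^2/(q+1) := by gcongr
      have hlam1 := mul_le_mul_of_nonneg_left hA1 hlam.le
      have h5 : lam * ((φ t)^2/2 - (φ t)^2/(q+1)) ≤ (1/2)*(φ' t)^2 := by
        nlinarith [hlam1, h2]
      have hY : (1/4:ℝ) ≤ (φ t)^2 := by nlinarith
      have hc : (0:ℝ) < (q-1)/(2*(q+1)) := by positivity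
      have key : (φ t)^2/2 - (φ t)^2/(q+1) = (φ t)^2 * ((q-1)/(2*(q+1))) := by
        field_simp
        ring
      have h6 : lam * ((1/4) * ((q-1)/(2*(q+1)))) ≤ lam * ((φ t)^2/2 - (φ t)^2/(q+1)) := by
        rw [key]
        apply mul_le_mul_of_nonneg_left _ hlam.le
        nlinarith [mul_nonneg (show (0:ℝ) ≤ (φ t)^2 - 1/4 by linarith) hc.le]
      have e2 : 2 * (lam * ((1/4) * ((q-1)/(2*(q+1))))) = 2*lam*((q-1)/(8*(q+1))) := by
        field_simp
        ring
      linarith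
    calc v ≤ Real.sqrt ((φ' t)^2) := Real.sqrt_le_sqrt h3
      _ = |φ' t| := Real.sqrt_sq_eq_abs _
  -- the limit L of the energy
  have hne : (E '' Ici (1:ℝ)).Nonempty := ⟨E 1, 1, self_mem_Ici, rfl⟩
  have hbddb : BddBelow (E '' Ici (1:ℝ)) := by
    refine ⟨0, ?_⟩
    rintro x ⟨t, ht, rfl⟩
    exact hE0 t (by simp only [mem_Ioi]; linarith [mem_Ici.1 ht])
  set L := sInf (E '' Ici (1:ℝ)) with hLdef
  have hLle : ∀ t, 1 ≤ t → L ≤ E t := fun t ht => csInf_le hbddb ⟨t, ht, rfl⟩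
  have hLnear : ∀ d, 0 < d → ∃ s, 1 ≤ s ∧ ∀ t, s ≤ t → E t < L + d := by
    intro d hd
    obtain ⟨x, ⟨s, hs, rfl⟩, hx⟩ := exists_lt_of_csInf_lt hne (lt_add_of_pos_right L hd)
    refine ⟨s, hs, fun t ht => lt_of_le_of_lt ?_ hx⟩
    exact hEanti (by simp only [mem_Ioi]; linarith [mem_Ici.1 hs])
      (by simp only [mem_Ioi]; linarith [mem_Ici.1 hs]) ht
  have hL0 : 0 ≤ L := by
    apply le_csInf hne
    rintro x ⟨t, ht, rfl⟩
    exact hE0 t (by simp only [mem_Ioi]; linarith [mem_Ici.1 ht])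
  -- eventually φ < 1
  have hlt1 : ∃ T, 1 ≤ T ∧ ∀ t, T ≤ t → φ t < 1 := by
    by_contra hcon
    push_neg at hcon
    have hKpos : 0 < ((n:ℝ)-1) * v := mul_pos (by linarith) hvpos
    obtain ⟨s, hs1, hs2⟩ := hLnear (((n:ℝ)-1) * v / 2) (by linarith)
    obtain ⟨t₀, ht₀s, ht₀1⟩ := hcon s hs1
    have ht₀pos : (0:ℝ) < t₀ := by linarith
    obtain ⟨t₂, ht₂, hφt₂⟩ := hfreq (1/2) (by norm_num) t₀
    have ht₀t₂ : t₀ < t₂ := by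
      rcases eq_or_lt_of_le ht₂ with h|h
      · rw [← h] at hφt₂; linarith
      · exact h
    have hSbne : ({u | u ∈ Icc t₀ t₂ ∧ φ u ≤ 1/2}).Nonempty :=
      ⟨t₂, ⟨⟨ht₂, le_rfl⟩, hφt₂.le⟩⟩
    have hSbbdd : BddBelow {u | u ∈ Icc t₀ t₂ ∧ φ u ≤ 1/2} := ⟨t₀, fun u hu => hu.1.1⟩
    have hcontI : ContinuousOn φ (Icc t₀ t₂) := by
      intro u hu
      exact (hd1 u (by simp only [mem_Ioi]; linarith [hu.1])).continuousAt.continuousWithinAt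
    have hSbc : IsClosed {u | u ∈ Icc t₀ t₂ ∧ φ u ≤ 1/2} :=
      hcontI.preimage_isClosed_of_isClosed isClosed_Icc (isClosed_Iic (a := (1/2:ℝ)))
    obtain ⟨⟨hβ1, hβ2⟩, hβ3⟩ := hSbc.csInf_mem hSbne hSbbdd
    set β := sInf {u | u ∈ Icc t₀ t₂ ∧ φ u ≤ 1/2} with hβdef
    have hβlb : ∀ u, t₀ ≤ u → u < β → 1/2 < φ u := by
      intro u h1 h2
      by_contra hle
      push_neg at hle
      have : β ≤ u := csInf_le hSbbdd ⟨⟨h1, le_trans h2.le hβ2⟩, hle⟩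
      linarith
    have ht₀β : t₀ < β := by
      rcases eq_or_lt_of_le hβ1 with h|h
      · rw [← h] at hβ3; linarith
      · exact h
    have hSane : ({u | u ∈ Icc t₀ β ∧ 1 ≤ φ u}).Nonempty := ⟨t₀, ⟨⟨le_rfl, hβ1⟩, ht₀1⟩⟩
    have hSabdd : BddAbove {u | u ∈ Icc t₀ β ∧ 1 ≤ φ u} := ⟨β, fun u hu => hu.1.2⟩
    have hcontI2 : ContinuousOn φ (Icc t₀ β) := hcontI.mono (Icc_subset_Icc le_rfl hβ2)
    have hSac : IsClosed {u | u ∈ Icc t₀ β ∧ 1 ≤ φ u} :=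
      hcontI2.preimage_isClosed_of_isClosed isClosed_Icc (isClosed_Ici (a := (1:ℝ)))
    obtain ⟨⟨hα1, hα2⟩, hα3⟩ := hSac.csSup_mem hSane hSabdd
    set α := sSup {u | u ∈ Icc t₀ β ∧ 1 ≤ φ u} with hαdef
    have hαβ : α < β := by
      rcases eq_or_lt_of_le hα2 with h|h
      · rw [h] at hα3; linarith
      · exact h
    have hαub : ∀ u, α < u → u ≤ β → φ u < 1 := by
      intro u h1 h2
      by_contra hle
      push_neg at hle
      have : u ≤ α := le_csSup hSabdd ⟨⟨le_trans hα1 h1.le, h2⟩, hle⟩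
      linarith
    have hαpos : (0:ℝ) < α := by linarith
    have hHd : ∀ x ∈ Ioi (0:ℝ), HasDerivAt (fun u => E u - ((n:ℝ)-1)*v * φ u)
        (-(A x * (φ' x)^2) - ((n:ℝ)-1)*v * φ' x) x := by
      intro x hx
      exact (hEd x hx).sub ((hd1 x hx).const_mul _)
    have hHanti : AntitoneOn (fun u => E u - ((n:ℝ)-1)*v * φ u) (Icc α β) := by
      apply antitoneOn_of_deriv_nonpos (convex_Icc _ _)
      · intro x hx
        have hx0 : x ∈ Ioi (0:ℝ) := mem_Ioi.2 (by linarith [hx.1])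
        exact (hHd x hx0).continuousAt.continuousWithinAt
      · intro x hx
        rw [interior_Icc] at hx
        have hx0 : x ∈ Ioi (0:ℝ) := mem_Ioi.2 (by linarith [hx.1])
        exact (hHd x hx0).differentiableAt.differentiableWithinAt
      · intro x hx
        rw [interior_Icc] at hx
        have hx0 : x ∈ Ioi (0:ℝ) := by simp only [mem_Ioi]; linarith [hx.1]
        rw [(hHd x hx0).deriv]
        have hφl : 1/2 < φ x := hβlb x (by linarith [hx.1]) hx.2
        have hφr : φ x < 1 := hαub x hx.1 hx.2.le
        have h3 : v ≤ |φ' x| := hspeed x hx0 hφl.le hφr.le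
        have h4 := hAge x hx0
        have e1 : ((n:ℝ)-1)*v * (-(φ' x)) ≤ ((n:ℝ)-1)*v * |φ' x| :=
          mul_le_mul_of_nonneg_left (neg_le_abs _) hKpos.le
        have e2 : ((n:ℝ)-1)*v * |φ' x| ≤ ((n:ℝ)-1) * ((φ' x)^2) := by
          have h5 : v * |φ' x| ≤ |φ' x| * |φ' x| :=
            mul_le_mul_of_nonneg_right h3 (abs_nonneg _)
          have h6 : |φ' x| * |φ' x| = (φ' x)^2 := by
            rw [abs_mul_abs_self]; ring
          nlinarith [mul_le_mul_of_nonneg_left h5 (show (0:ℝ) ≤ (n:ℝ)-1 by linarith), h6]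
        have e3 : ((n:ℝ)-1) * ((φ' x)^2) ≤ A x * (φ' x)^2 :=
          mul_le_mul_of_nonneg_right h4 (sq_nonneg _)
        linarith
    have hHba := hHanti (left_mem_Icc.2 hαβ.le) (right_mem_Icc.2 hαβ.le) hαβ.le
    simp only at hHba
    have hEα : E α < L + ((n:ℝ)-1) * v / 2 := hs2 α (by linarith)
    have hEβ : L ≤ E β := hLle β (by linarith)
    have hKφ : ((n:ℝ)-1)*v * (1/2) ≤ ((n:ℝ)-1)*v * (φ α - φ β) := by
      apply mul_le_mul_of_nonneg_left _ hKpos.le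
      linarith
    have hdist : ((n:ℝ)-1)*v*(φ α - φ β) = ((n:ℝ)-1)*v*φ α - ((n:ℝ)-1)*v*φ β := by ring
    linarith
  obtain ⟨T₁, hT₁1, hT₁⟩ := hlt1
  have hTpos : (0:ℝ) < T₁ := by linarith
  -- φ' is negative beyond T₁
  have hφ'neg : ∀ t, T₁ ≤ t → φ' t < 0 := by
    intro t ht
    have ht0 : t ∈ Ioi (0:ℝ) := by simp only [mem_Ioi]; linarith
    rcases lt_trichotomy (φ' t) 0 with h|h|h
    · exact h
    · exact absurd (hcrit t ht0 h) (by linarith [hT₁ t ht])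
    · exfalso
      obtain ⟨r, hr1, hr2⟩ := hfreq (φ t) (hpos t ht0) (t+1)
      have htr : t < r := by linarith
      have hcont2 : ContinuousOn φ (Icc t r) := by
        intro u hu
        have : u ∈ Ioi (0:ℝ) := by simp only [mem_Ioi]; linarith [hu.1]
        exact (hd1 u this).continuousAt.continuousWithinAt
      obtain ⟨ξ, hξ, hξeq⟩ := exists_hasDerivAt_eq_slope φ φ' htr hcont2
        (fun x hx => hd1 x (by simp only [mem_Ioi]; linarith [hx.1]))
      have hξneg : φ' ξ < 0 := by
        rw [hξeq]
        apply div_neg_of_neg_of_pos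
        · linarith
        · linarith
      have hcont3 : ContinuousOn φ' (Icc t ξ) := by
        intro u hu
        have : u ∈ Ioi (0:ℝ) := by simp only [mem_Ioi]; linarith [hu.1]
        exact (hd2 u this).continuousAt.continuousWithinAt
      have h0mem : (0:ℝ) ∈ Icc (φ' ξ) (φ' t) := ⟨hξneg.le, h.le⟩
      obtain ⟨u, hu, hu0⟩ := intermediate_value_Icc' hξ.1.le hcont3 h0mem
      have hu0' : 1 < φ u := hcrit u (by simp only [mem_Ioi]; linarith [hu.1]) hu0
      have : φ u < 1 := hT₁ u (by linarith [hu.1])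
      linarith
  -- φ is antitone on [T₁, ∞)
  have hanti : AntitoneOn φ (Ici T₁) := by
    have hs : StrictAntiOn φ (Ici T₁) := by
      apply strictAntiOn_of_deriv_neg (convex_Ici _)
      · intro x hx
        have hx0 : x ∈ Ioi (0:ℝ) := mem_Ioi.2 (by linarith [mem_Ici.1 hx])
        exact (hd1 x hx0).continuousAt.continuousWithinAt
      · intro x hx
        rw [interior_Ici] at hx
        rw [(hd1 x (by simp only [mem_Ioi]; linarith [mem_Ioi.1 hx])).deriv]
        exact hφ'neg x (mem_Ioi.1 hx).le
    exact hs.antitoneOn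
  -- φ tends to 0
  have hφ0 : Tendsto φ atTop (nhds 0) := by
    rw [Metric.tendsto_atTop]
    intro ε hε
    obtain ⟨s, hs1, hs2⟩ := hfreq ε hε T₁
    refine ⟨s, fun t ht => ?_⟩
    have hts : φ t ≤ φ s := hanti (mem_Ici.2 hs1) (mem_Ici.2 (le_trans hs1 ht)) ht
    have hpt : 0 < φ t := hpos t (by simp only [mem_Ioi]; linarith)
    rw [Real.dist_eq, sub_zero, abs_of_pos hpt]
    linarith
  -- L = 0 and E tends to 0
  have hL0' : L ≤ 0 := by
    by_contra hcon
    push_neg at hcon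
    have hwpos : 0 < Real.sqrt L := Real.sqrt_pos.2 hcon
    have hδpos : 0 < min 1 (Real.sqrt (L/(4*lam))) :=
      lt_min one_pos (Real.sqrt_pos.2 (by positivity))
    have hsmall := hφ0.eventually (eventually_lt_nhds hδpos)
    obtain ⟨T₂, hT₂⟩ := (eventually_atTop).1 (hsmall.and (eventually_ge_atTop (max T₁ 1)))
    set T' := max T₂ (max T₁ 1) with hT'def
    have hT'1 : (1:ℝ) ≤ T' := le_trans (le_max_right T₁ 1) (le_max_right _ _)
    have hT'T₁ : T₁ ≤ T' := le_trans (le_max_left T₁ 1) (le_max_right _ _)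
    have hderneg : ∀ t, T' ≤ t → φ' t ≤ -Real.sqrt L := by
      intro t ht
      obtain ⟨h1, h2⟩ := hT₂ t (le_trans (le_max_left _ _) ht)
      have ht1 : (1:ℝ) ≤ t := le_trans hT'1 ht
      have ht0 : t ∈ Ioi (0:ℝ) := by simp only [mem_Ioi]; linarith
      have hφt := hpos t ht0
      have hφ1 : φ t ≤ 1 := le_of_lt (lt_of_lt_of_le h1 (min_le_left _ _))
      have hφδ : φ t < Real.sqrt (L/(4*lam)) := lt_of_lt_of_le h1 (min_le_right _ _)
      have hφsq : (φ t)^2 ≤ L/(4*lam) := by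
        have hLl : (0:ℝ) ≤ L/(4*lam) := by positivity
        nlinarith [Real.sq_sqrt hLl, Real.sqrt_nonneg (L/(4*lam))]
      have hrp : (φ t)^(q+1) ≤ (φ t)^2 := by
        have := Real.rpow_le_rpow_of_exponent_ge hφt hφ1 (show (2:ℝ) ≤ q+1 by linarith)
        rwa [Real.rpow_two] at this
      have hEt : L ≤ E t := hLle t ht1
      rw [hE t, abs_of_pos hφt] at hEt
      have h3 : (φ t)^(q+1)/(q+1) ≤ (φ t)^2 := by
        rw [div_le_iff₀ hq1]
        nlinarith [hrp, mul_nonneg (sq_nonneg (φ t)) (show (0:ℝ) ≤ q by linarith)]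
      have hterm : lam * ((φ t)^(q+1)/(q+1) - (φ t)^2/2) ≤ lam * (φ t)^2 := by
        nlinarith [mul_le_mul_of_nonneg_left h3 hlam.le,
          mul_nonneg hlam.le (sq_nonneg (φ t))]
      have hlamφ : lam * (φ t)^2 ≤ L/4 := by
        have h7 := mul_le_mul_of_nonneg_left hφsq hlam.le
        have h8 : lam * (L/(4*lam)) = L/4 := by
          field_simp
        linarith
      have hsq2 : L ≤ (φ' t)^2 := by linarith
      have h9 : Real.sqrt L ≤ |φ' t| := by
        calc Real.sqrt L ≤ Real.sqrt ((φ' t)^2) := Real.sqrt_le_sqrt hsq2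
          _ = |φ' t| := Real.sqrt_sq_eq_abs _
      have hneg := hφ'neg t (le_trans hT'T₁ ht)
      rw [abs_of_neg hneg] at h9
      linarith
    have hT'pos : (0:ℝ) < T' := by linarith
    have hφT' := hpos T' (by simp only [mem_Ioi]; linarith)
    have hb : T' < T' + φ T' / Real.sqrt L + 1 := by
      have : 0 < φ T' / Real.sqrt L := div_pos hφT' hwpos
      linarith
    have hcontb : ContinuousOn φ (Icc T' (T' + φ T' / Real.sqrt L + 1)) := by
      intro u hu
      exact (hd1 u (by simp only [mem_Ioi]; linarith [hu.1])).continuousAt.continuousWithinAt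
    obtain ⟨ξ, hξ, hξeq⟩ := exists_hasDerivAt_eq_slope φ φ' hb hcontb
      (fun x hx => hd1 x (by simp only [mem_Ioi]; linarith [hx.1]))
    have h1 : φ' ξ ≤ -Real.sqrt L := hderneg ξ hξ.1.le
    rw [hξeq] at h1
    have hbT : (0:ℝ) < (T' + φ T' / Real.sqrt L + 1) - T' := by linarith
    rw [div_le_iff₀ hbT] at h1
    have h3 : Real.sqrt L * ((T' + φ T' / Real.sqrt L + 1) - T') = φ T' + Real.sqrt L := by
      field_simp
      ring
    have hφb := hpos (T' + φ T' / Real.sqrt L + 1) (by simp only [mem_Ioi]; linarith)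
    nlinarith [h1, h3, hφb, hwpos]
  have hEtends : Tendsto E atTop (nhds 0) := by
    have hLeq : L = 0 := le_antisymm hL0' hL0
    rw [Metric.tendsto_atTop]
    intro ε hε
    obtain ⟨s, hs1, hs2⟩ := hLnear ε hε
    refine ⟨s, fun t ht => ?_⟩
    have h1 : E t < L + ε := hs2 t ht
    have h2 : 0 ≤ E t := hE0 t (by simp only [mem_Ioi]; linarith)
    rw [Real.dist_eq, sub_zero, abs_of_nonneg h2]
    rw [hLeq] at h1
    linarith
  exact ⟨hEtends, hnomin, ⟨T₁, hTpos, hanti⟩, hφ0⟩
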